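/- Define g : ℝ → ℝ by g(u) = 4·arctan(exp(u)). Then g is twice differentiable and g''(u) = sin(g(u)) for all u ∈ ℝ. -/

import Mathlib

open Real

lemma kink_deriv1 (u : ℝ) :
    HasDerivAt (fun u : ℝ => 4 * Real.arctan (Real.exp u))
      (4 * Real.exp u / (1 + Real.exp u ^ 2)) u := by
  have h := (Real.hasDerivAt_arctan (Real.exp u)).comp u (Real.hasDerivAt_exp u)
  have h2 := h.const_mul (4 : ℝ)
  refine h2.congr_deriv ?_
  ring

lemma kink_deriv1_eq :
    deriv (fun u : ℝ => 4 * Real.arctan (Real.exp u)) =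
      fun u => 4 * Real.exp u / (1 + Real.exp u ^ 2) := by
  funext u; exact (kink_deriv1 u).deriv

lemma kink_denom_ne (u : ℝ) : (1 : ℝ) + Real.exp u ^ 2 ≠ 0 := by positivity

lemma kink_deriv2 (u : ℝ) :
    HasDerivAt (fun u : ℝ => 4 * Real.exp u / (1 + Real.exp u ^ 2))
      (4 * Real.exp u * (1 - Real.exp u ^ 2) / (1 + Real.exp u ^ 2) ^ 2) u := by
  have hnum : HasDerivAt (fun u : ℝ => 4 * Real.exp u) (4 * Real.exp u) u :=
    (Real.hasDerivAt_exp u).const_mul 4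
  have hden : HasDerivAt (fun u : ℝ => 1 + Real.exp u ^ 2)
      (2 * Real.exp u * Real.exp u) u := by
    have := ((Real.hasDerivAt_exp u).pow 2).const_add 1
    refine this.congr_deriv ?_; ring
  have := hnum.div hden (kink_denom_ne u)
  refine this.congr_deriv ?_
  field_simp
  ring

lemma sin_four_arctan (x : ℝ) :
    Real.sin (4 * Real.arctan x) = 4 * x * (1 - x ^ 2) / (1 + x ^ 2) ^ 2 := by
  have hx : (0:ℝ) < 1 + x ^ 2 := by positivity
  have hs : Real.sqrt (1 + x ^ 2) ^ 2 = 1 + x ^ 2 := Real.sq_sqrt hx.le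
  have hsne : Real.sqrt (1 + x ^ 2) ≠ 0 := by positivity
  have h4 : (4 : ℝ) * Real.arctan x = 2 * (2 * Real.arctan x) := by ring
  rw [h4, Real.sin_two_mul, Real.sin_two_mul, Real.cos_two_mul, Real.sin_arctan,
    Real.cos_arctan]
  field_simp
  ring_nf
  rw [show √(1 + x ^ 2) ^ 4 = (√(1 + x ^ 2) ^ 2) ^ 2 by ring, hs]
  ring

/-- The sine-Gordon kink profile `g(u) = 4 arctan(eᵘ)` is twice
differentiable and satisfies `g''(u) = sin(g(u))`. -/
theorem kink_profile_second_derivative :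
    (Differentiable ℝ (fun u : ℝ => 4 * Real.arctan (Real.exp u))) ∧
    (Differentiable ℝ (deriv (fun u : ℝ => 4 * Real.arctan (Real.exp u)))) ∧
    ∀ u : ℝ, deriv (deriv (fun u : ℝ => 4 * Real.arctan (Real.exp u))) u =
      Real.sin (4 * Real.arctan (Real.exp u)) := by
  refine ⟨fun u => (kink_deriv1 u).differentiableAt, ?_, ?_⟩
  · rw [kink_deriv1_eq]
    exact fun u => (kink_deriv2 u).differentiableAt
  · intro u
    rw [kink_deriv1_eq, (kink_deriv2 u).deriv, sin_four_arctan]
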